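/- Let d ≥ 1 and let u be a random vector distributed according to the standard Gaussian measure N(0, I_d) on ℝ^d. Then for every real k ≥ 2, the k-th moment of the Euclidean norm satisfies E[‖u‖^k] ≤ (d + k)^{k/2}. -/

import Mathlib

open MeasureTheory ProbabilityTheory Real

lemma gaussianReal_eq_withDensity' :
    gaussianReal 0 1 = volume.withDensity
      (fun x => ((gaussianPDFReal 0 1 x).toNNReal : ENNReal)) := by
  rw [gaussianReal_of_var_ne_zero 0 one_ne_zero]
  rfl

lemma integral_gaussianReal_eq' (g : ℝ → ℝ) :
    ∫ x, g x ∂(gaussianReal 0 1) = ∫ x, gaussianPDFReal 0 1 x * g x := by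
  rw [gaussianReal_eq_withDensity',
    integral_withDensity_eq_integral_smul (measurable_gaussianPDFReal 0 1).real_toNNReal g]
  congr 1
  ext x
  simp [NNReal.smul_def, Real.coe_toNNReal _ (gaussianPDFReal_nonneg 0 1 x)]

lemma integrable_gaussianReal_iff' (g : ℝ → ℝ) :
    Integrable g (gaussianReal 0 1) ↔
      Integrable (fun x => gaussianPDFReal 0 1 x * g x) volume := by
  rw [gaussianReal_eq_withDensity',
    integrable_withDensity_iff_integrable_smul (measurable_gaussianPDFReal 0 1).real_toNNReal]
  constructor <;> intro h <;> refine h.congr (Filter.Eventually.of_forall fun x => ?_) <;>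
    simp [NNReal.smul_def, Real.coe_toNNReal _ (gaussianPDFReal_nonneg 0 1 x)]

lemma gaussianPDF_mul_exp (t : ℝ) :
    (fun x => gaussianPDFReal 0 1 x * rexp (t * x ^ 2))
      = fun x => (√(2 * π))⁻¹ * rexp (-(1/2 - t) * x ^ 2) := by
  funext x
  rw [gaussianPDFReal]
  simp only [NNReal.coe_one, mul_one, sub_zero]
  rw [mul_assoc, ← Real.exp_add]
  congr 1
  ring

lemma integrable_exp_sq_gaussian {t : ℝ} (ht : t < 1/2) :
    Integrable (fun x => rexp (t * x ^ 2)) (gaussianReal 0 1) := by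
  rw [integrable_gaussianReal_iff', gaussianPDF_mul_exp]
  exact (integrable_exp_neg_mul_sq (by linarith)).const_mul _

lemma integral_exp_sq_gaussian {t : ℝ} (ht : t < 1/2) :
    ∫ x, rexp (t * x ^ 2) ∂(gaussianReal 0 1) = (1 - 2*t) ^ (-(1:ℝ)/2) := by
  have h12 : (0:ℝ) < 1 - 2*t := by linarith
  rw [integral_gaussianReal_eq', gaussianPDF_mul_exp, integral_const_mul, integral_gaussian]
  rw [show (-(1:ℝ)/2) = -(1/2) by ring, Real.rpow_neg h12.le, ← Real.sqrt_eq_rpow]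
  have h1 : π / (1/2 - t) = 2 * π / (1 - 2*t) := by
    field_simp
  rw [h1, Real.sqrt_div (by positivity)]
  have h2pi : √(2 * π) ≠ 0 := by positivity
  field_simp

lemma integrable_pi_prod {n : ℕ} (μ : Measure ℝ) [IsProbabilityMeasure μ] {f : ℝ → ℝ}
    (hf : Integrable f μ) :
    Integrable (fun x : Fin n → ℝ => ∏ i, f (x i)) (Measure.pi fun _ => μ) := by
  induction n with
  | zero => simpa using (integrable_const (1:ℝ))
  | succ n ih =>
    have h := (measurePreserving_piFinSuccAbove (fun _ : Fin (n+1) => μ) 0).symm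
    rw [← h.integrable_comp_emb (MeasurableEquiv.measurableEmbedding _)]
    simp_rw [MeasurableEquiv.piFinSuccAbove_symm_apply, Fin.insertNthEquiv,
      Fin.prod_univ_succ, Fin.insertNth_zero]
    simp only [Fin.zero_succAbove, Function.comp_def, Fin.cons_zero, Fin.cons_succ,
      Equiv.coe_fn_mk]
    exact Integrable.mul_prod hf ih

lemma integral_pi_prod {n : ℕ} (μ : Measure ℝ) [IsProbabilityMeasure μ] (f : ℝ → ℝ) :
    ∫ x : Fin n → ℝ, ∏ i, f (x i) ∂(Measure.pi fun _ => μ) = (∫ x, f x ∂μ) ^ n := by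
  induction n with
  | zero => simp
  | succ n ih =>
    calc
      _ = ∫ x : ℝ × (Fin n → ℝ), f x.1 * ∏ i : Fin n, f (x.2 i)
            ∂(μ.prod (Measure.pi fun _ => μ)) := by
        rw [← ((measurePreserving_piFinSuccAbove (fun _ : Fin (n+1) => μ) 0).symm).integral_comp']
        simp only [MeasurableEquiv.piFinSuccAbove_symm_apply, Fin.insertNthEquiv,
          Fin.prod_univ_succ, Fin.insertNth_zero, Equiv.coe_fn_mk, Fin.cons_succ,
          Fin.zero_succAbove, Fin.cons_zero, cast_eq]
      _ = (∫ x, f x ∂μ) * (∫ x, f x ∂μ) ^ n := by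
        rw [integral_prod_mul (f := f) (g := fun (y : Fin n → ℝ) => ∏ i, f (y i)), ih]
      _ = _ := by rw [pow_succ]; ring

lemma exp_sum_sq (t : ℝ) (n : ℕ) (x : Fin n → ℝ) :
    rexp (t * ∑ i, x i ^ 2) = ∏ i, rexp (t * x i ^ 2) := by
  rw [← Real.exp_sum, Finset.mul_sum]

/-- The standard Gaussian measure `N(0, I_d)` on `ℝ^d = EuclideanSpace ℝ (Fin d)`. -/
noncomputable def stdGaussian (d : ℕ) : Measure (EuclideanSpace ℝ (Fin d)) :=
  (Measure.pi fun _ : Fin d => gaussianReal 0 1).map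
    (MeasurableEquiv.toLp 2 (Fin d → ℝ))

lemma rpow_le_const_mul_exp {p t y : ℝ} (hp : 0 < p) (ht : 0 < t) (hy : 0 ≤ y) :
    y ^ p ≤ (p / (t * rexp 1)) ^ p * rexp (t * y) := by
  rcases eq_or_lt_of_le hy with h | hy'
  · rw [← h, Real.zero_rpow hp.ne']
    positivity
  · have h1 : t * y / p ≤ rexp (t * y / p - 1) := by
      have := Real.add_one_le_exp (t * y / p - 1)
      linarith
    have h2 : y = (t * y / p) * (p / t) := by field_simp
    have h3 : y ^ p = (t * y / p) ^ p * (p / t) ^ p := by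
      rw [← Real.mul_rpow (by positivity) (by positivity)]
      exact congrArg (· ^ p) h2
    have h4 : (t * y / p) ^ p ≤ rexp (t * y / p - 1) ^ p :=
      Real.rpow_le_rpow (by positivity) h1 hp.le
    have h5 : rexp (t * y / p - 1) ^ p = rexp (t * y - p) := by
      rw [← Real.exp_mul]
      congr 1
      field_simp
    have h6 : (p / (t * rexp 1)) ^ p = (p / t) ^ p * rexp (-p) := by
      rw [show p / (t * rexp 1) = (p / t) * (rexp 1)⁻¹ by field_simp,
        Real.mul_rpow (by positivity) (by positivity), ← Real.exp_neg, ← Real.exp_mul]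
      ring_nf
    rw [h3, h6]
    have h7 : (t * y / p) ^ p * (p / t) ^ p ≤ rexp (t * y - p) * (p / t) ^ p :=
      mul_le_mul_of_nonneg_right (h4.trans h5.le) (by positivity)
    refine h7.trans_eq ?_
    rw [show t * y - p = -p + t * y by ring, Real.exp_add]
    ring

/-- For `u ∼ N(0, I_d)` on `ℝ^d` with `d ≥ 1` and any real `k ≥ 2`,
`E[‖u‖^k] ≤ (d + k)^(k/2)`. -/
theorem gaussian_norm_moment_le (d : ℕ) (hd : 1 ≤ d) (k : ℝ) (hk : 2 ≤ k) :
    ∫ u, ‖u‖ ^ k ∂(stdGaussian d) ≤ ((d : ℝ) + k) ^ (k / 2) := by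
  have hd0 : (0:ℝ) < d := by exact_mod_cast hd
  set p : ℝ := k / 2 with hp
  have hp0 : 0 < p := by rw [hp]; linarith
  set T : ℝ := (d:ℝ) + k with hT
  have hT0 : 0 < T := by rw [hT]; linarith
  set t : ℝ := p / T with ht
  have ht0 : 0 < t := div_pos hp0 hT0
  have htlt : t < 1/2 := by
    rw [ht, div_lt_iff₀ hT0, hp, hT]
    linarith
  set C : ℝ := (p / (t * rexp 1)) ^ p with hC
  have hC0 : 0 ≤ C := by positivity
  set e := (MeasurableEquiv.toLp 2 (Fin d → ℝ)).symm with he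
  have hnorm : ∀ x : Fin d → ℝ, ‖e.symm x‖ ^ 2 = ∑ i, x i ^ 2 := by
    intro x
    rw [EuclideanSpace.norm_eq, Real.sq_sqrt (by positivity)]
    simp [he, MeasurableEquiv.symm_symm, MeasurableEquiv.coe_toLp, PiLp.toLp_apply,
      Real.norm_eq_abs, sq_abs]
  have key : ∀ u : EuclideanSpace ℝ (Fin d), ‖u‖ ^ k ≤ C * rexp (t * ‖u‖ ^ 2) := by
    intro u
    have h1 := rpow_le_const_mul_exp (y := ‖u‖ ^ 2) hp0 ht0 (by positivity)
    calc ‖u‖ ^ k = (‖u‖ ^ 2) ^ p := by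
          rw [← Real.rpow_natCast ‖u‖ 2, ← Real.rpow_mul (norm_nonneg u)]
          congr 1
          rw [hp]; ring
      _ ≤ _ := h1
  have hprodfun : (fun x : Fin d → ℝ => C * rexp (t * ‖e.symm x‖ ^ 2))
      = fun x => C * ∏ i, rexp (t * x i ^ 2) := by
    funext x
    rw [hnorm, exp_sum_sq]
  have hint : Integrable (fun u : EuclideanSpace ℝ (Fin d) => C * rexp (t * ‖u‖ ^ 2))
      (stdGaussian d) := by
    rw [_root_.stdGaussian, integrable_map_equiv]
    have h2 := (integrable_pi_prod (n := d) (gaussianReal 0 1)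
      (integrable_exp_sq_gaussian htlt)).const_mul C
    exact (hprodfun ▸ h2 : Integrable (fun x : Fin d → ℝ => C * rexp (t * ‖e.symm x‖ ^ 2)) _)
  have hcalc : ∫ u, C * rexp (t * ‖u‖ ^ 2) ∂(stdGaussian d)
      = C * ((1 - 2*t) ^ (-(1:ℝ)/2)) ^ d := by
    rw [_root_.stdGaussian, integral_map_equiv]
    show ∫ x : Fin d → ℝ, C * rexp (t * ‖e.symm x‖ ^ 2)
        ∂(Measure.pi fun _ : Fin d => gaussianReal 0 1) = _
    rw [hprodfun, integral_const_mul,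
      integral_pi_prod (gaussianReal 0 1) (fun y => rexp (t * y ^ 2)),
      integral_exp_sq_gaussian htlt]
  have hmono : ∫ u, ‖u‖ ^ k ∂(stdGaussian d) ≤ ∫ u, C * rexp (t * ‖u‖ ^ 2) ∂(stdGaussian d) :=
    integral_mono_of_nonneg
      (Filter.Eventually.of_forall fun u => Real.rpow_nonneg (norm_nonneg u) k)
      hint (Filter.Eventually.of_forall key)
  refine (hmono.trans_eq hcalc).trans ?_
  -- numeric bound
  have h1 : 1 - 2*t = (d:ℝ) / T := by
    rw [ht, hp, hT]
    field_simp
    ring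
  have hCval : C = T ^ p * rexp (-p) := by
    rw [hC, show p / (t * rexp 1) = T / rexp 1 by rw [ht]; field_simp,
      Real.div_rpow hT0.le (Real.exp_pos 1).le, Real.exp_one_rpow, Real.exp_neg, div_eq_mul_inv]
  have hA : ((1 - 2*t) ^ (-(1:ℝ)/2)) ^ d = (T/d) ^ ((d:ℝ)/2) := by
    rw [h1, ← Real.rpow_natCast (((d:ℝ)/T) ^ (-(1:ℝ)/2)) d,
      ← Real.rpow_mul (by positivity),
      show (-(1:ℝ)/2) * d = -((d:ℝ)/2) by ring,
      Real.rpow_neg (by positivity), ← Real.inv_rpow (by positivity), inv_div]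
  have hF : (T/d) ^ ((d:ℝ)/2) ≤ rexp p := by
    rw [Real.rpow_def_of_pos (div_pos hT0 hd0)]
    apply Real.exp_le_exp.mpr
    have hlog : Real.log (T/d) ≤ T/d - 1 := Real.log_le_sub_one_of_pos (div_pos hT0 hd0)
    have heq : T/(d:ℝ) - 1 = k/d := by
      rw [hT]
      field_simp
      ring
    calc Real.log (T/d) * ((d:ℝ)/2) ≤ (k/d) * ((d:ℝ)/2) := by
          apply mul_le_mul_of_nonneg_right _ (by positivity)
          rw [← heq]; exact hlog
      _ = p := by rw [hp]; field_simp
  calc C * ((1 - 2*t) ^ (-(1:ℝ)/2)) ^ d = T ^ p * (rexp (-p) * (T/d) ^ ((d:ℝ)/2)) := by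
        rw [hCval, hA]; ring
    _ ≤ T ^ p * (rexp (-p) * rexp p) := by
        apply mul_le_mul_of_nonneg_left _ (by positivity)
        exact mul_le_mul_of_nonneg_left hF (Real.exp_pos _).le
    _ = T ^ p := by rw [← Real.exp_add]; simp
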